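/- Let F be a finite field with q elements and let R = {f ∈ F[[z]] : the coefficient of z in f is 0} be the subring F[[z^2, z^3]] of the formal power series ring F[[z]]. Then for every d ≥ 0, the number of ideals I ⊆ R with dim_F(R/I) = d equals 1 if d ∈ {0, 1} and equals q + 1 if d ≥ 2. Consequently (1 − t)·∑_{I ideal of R, finite codim} t^{dim_F(R/I)} = 1 + q t^2. -/

import Mathlib

set_option maxHeartbeats 1000000
set_option synthInstance.maxHeartbeats 400000

def Rcusp (F : Type*) [Field F] : Subalgebra F (PowerSeries F) where
  carrier := {f | PowerSeries.coeff 1 f = 0}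
  add_mem' := by
    intro f g hf hg
    simp only [Set.mem_setOf_eq, map_add] at *
    rw [hf, hg, add_zero]
  mul_mem' := by
    intro f g hf hg
    simp only [Set.mem_setOf_eq] at *
    rw [PowerSeries.coeff_mul, Finset.Nat.sum_antidiagonal_eq_sum_range_succ_mk]
    simp [Finset.sum_range_succ, hf, hg]
  algebraMap_mem' := by
    intro r
    simp [Set.mem_setOf_eq, PowerSeries.algebraMap_apply, PowerSeries.coeff_C]

namespace Cusp

open PowerSeries

variable {F : Type*} [Field F]

lemma mem_Rcusp {f : PowerSeries F} : f ∈ Rcusp F ↔ coeff 1 f = 0 := Iff.rfl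

lemma coe_mul (f g : ↥(Rcusp F)) : ((f * g : ↥(Rcusp F)) : PowerSeries F) = (f : PowerSeries F) * g := rfl

/-- the monomial `z^m` as element of `Rcusp F`, for `m ≠ 1`. -/
noncomputable def mono (m : ℕ) (hm : m ≠ 1) : ↥(Rcusp F) :=
  ⟨X ^ m, by simp [mem_Rcusp, coeff_X_pow, Ne.symm hm]⟩

@[simp] lemma mono_val (m : ℕ) (hm : m ≠ 1) : ((mono m hm : ↥(Rcusp F)) : PowerSeries F) = X ^ m := rfl

/-- coefficient functional on `Rcusp F`. -/
noncomputable def cf (j : ℕ) : ↥(Rcusp F) →ₗ[F] F :=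
  (PowerSeries.coeff j).comp (Subalgebra.val (Rcusp F)).toLinearMap

@[simp] lemma cf_apply (j : ℕ) (f : ↥(Rcusp F)) : cf j f = coeff j (f : PowerSeries F) := rfl

lemma coeff_mul_eq_zero {r f : PowerSeries F} {n j : ℕ} (hj : j < n)
    (hf : ∀ i < n, coeff i f = 0) : coeff j (r * f) = 0 := by
  rw [PowerSeries.coeff_mul]
  refine Finset.sum_eq_zero fun p hp => ?_
  replace hp : p.1 + p.2 = j := by simpa using hp
  rw [hf p.2 (lt_of_le_of_lt (hp ▸ Nat.le_add_left p.2 p.1) hj), mul_zero]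

lemma coeff_mul_n {r f : PowerSeries F} {n : ℕ}
    (hf : ∀ i < n, coeff i f = 0) :
    coeff n (r * f) = coeff 0 r * coeff n f := by
  rw [PowerSeries.coeff_mul, Finset.Nat.sum_antidiagonal_eq_sum_range_succ_mk]
  apply Finset.sum_eq_single_of_mem 0 (Finset.mem_range.2 (Nat.succ_pos n))
  intro i hi hi0
  rw [hf (n - i) (by rw [Finset.mem_range] at hi; omega), mul_zero]

lemma coeff_mul_n1 {r f : PowerSeries F} {n : ℕ} (hr : coeff 1 r = 0)
    (hf : ∀ i < n, coeff i f = 0) :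
    coeff (n + 1) (r * f) = coeff 0 r * coeff (n + 1) f := by
  rw [PowerSeries.coeff_mul, Finset.Nat.sum_antidiagonal_eq_sum_range_succ_mk]
  apply Finset.sum_eq_single_of_mem 0 (Finset.mem_range.2 (Nat.succ_pos _))
  intro i hi hi0
  rcases eq_or_ne i 1 with h1 | h1
  · rw [h1, hr, zero_mul]
  · rw [hf (n + 1 - i) (by rw [Finset.mem_range] at hi; omega), mul_zero]

/-- The ideal `z^n F[[z]] ∩ R` of elements of order `≥ n`. -/
def Jinf (n : ℕ) : Ideal ↥(Rcusp F) where
  carrier := {f | ∀ j < n, coeff j (f : PowerSeries F) = 0}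
  zero_mem' := by intro j hj; simp
  add_mem' := by
    intro f g hf hg j hj
    push_cast
    rw [map_add, hf j hj, hg j hj, add_zero]
  smul_mem' := by
    intro r f hf j hj
    simpa [smul_eq_mul, coe_mul] using coeff_mul_eq_zero hj hf

lemma mem_Jinf {n : ℕ} {f : ↥(Rcusp F)} :
    f ∈ (Jinf n : Ideal ↥(Rcusp F)) ↔ ∀ j < n, coeff j (f : PowerSeries F) = 0 := Iff.rfl

/-- The ideal generated by `z^n + l z^{n+1}` (for `n ≥ 2`). -/
def Jlam (n : ℕ) (l : F) : Ideal ↥(Rcusp F) where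
  carrier := {f | (∀ j < n, coeff j (f : PowerSeries F) = 0) ∧
    coeff (n + 1) (f : PowerSeries F) = l * coeff n (f : PowerSeries F)}
  zero_mem' := by constructor <;> simp
  add_mem' := by
    intro f g hf hg
    refine ⟨fun j hj => ?_, ?_⟩
    · push_cast
      rw [map_add, hf.1 j hj, hg.1 j hj, add_zero]
    · push_cast
      rw [map_add, map_add, hf.2, hg.2, mul_add]
  smul_mem' := by
    intro r f hf
    refine ⟨fun j hj => ?_, ?_⟩
    · simpa [smul_eq_mul, coe_mul] using coeff_mul_eq_zero hj hf.1
    · have h1 : coeff 1 (r : PowerSeries F) = 0 := r.2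
      simp only [smul_eq_mul, coe_mul]
      rw [coeff_mul_n1 h1 hf.1, coeff_mul_n hf.1, hf.2]
      ring

lemma mem_Jlam {n : ℕ} {l : F} {f : ↥(Rcusp F)} :
    f ∈ Jlam n l ↔ (∀ j < n, coeff j (f : PowerSeries F) = 0) ∧
      coeff (n + 1) (f : PowerSeries F) = l * coeff n (f : PowerSeries F) := Iff.rfl

end Cusp

namespace Cusp
open PowerSeries
variable {F : Type*} [Field F]

/-- Index type: `{0,2,3,...,n-1}`. -/
abbrev Iota (n : ℕ) : Type := {j : Fin n // (j : ℕ) ≠ 1}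

lemma card_Iota {n : ℕ} (hn : 2 ≤ n) : Fintype.card (Iota n) = n - 1 := by
  have h1 : (1 : ℕ) < n := hn
  have e : Iota n ≃ {j : Fin n // ¬(j = ⟨1, h1⟩)} :=
    Equiv.subtypeEquivRight (fun j => by simp [Fin.ext_iff])
  rw [Fintype.card_congr e, Fintype.card_subtype_compl, Fintype.card_subtype_eq, Fintype.card_fin]

lemma card_Iota_zero : Fintype.card (Iota 0) = 0 := by
  have : IsEmpty (Iota 0) := ⟨fun j => j.1.elim0⟩
  exact Fintype.card_eq_zero

/-- Linear map whose kernel is `Jinf n`. -/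
noncomputable def Linf (n : ℕ) : ↥(Rcusp F) →ₗ[F] (Iota n → F) :=
  LinearMap.pi fun j => cf (j.1 : ℕ)

lemma ker_Linf (n : ℕ) :
    LinearMap.ker (Linf (F := F) n) = (Jinf n).restrictScalars F := by
  ext f
  simp only [LinearMap.mem_ker, Submodule.restrictScalars_mem, mem_Jinf]
  constructor
  · intro h j hj
    rcases eq_or_ne j 1 with rfl | hj1
    · exact f.2
    · exact congrFun h ⟨⟨j, hj⟩, hj1⟩
  · intro h
    funext j
    exact h j.1 j.1.2

lemma Linf_sum (n : ℕ) (g : Iota n → F) :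
    Linf (F := F) n (∑ j : Iota n, g j • mono (j.1 : ℕ) j.2) = g := by
  funext k
  have he : Linf (F := F) n (∑ j : Iota n, g j • mono (j.1 : ℕ) j.2) k
      = ∑ j : Iota n, g j * coeff (k.1 : ℕ) (X ^ (j.1 : ℕ)) := by
    simp [Linf, map_sum, LinearMap.pi_apply]
  rw [he, Finset.sum_eq_single_of_mem k (Finset.mem_univ k)]
  · simp [coeff_X_pow]
  · intro j _ hjk
    have : (k.1 : ℕ) ≠ (j.1 : ℕ) := by
      intro h
      exact hjk (Subtype.ext (Fin.ext h.symm))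
    rw [coeff_X_pow, if_neg this, mul_zero]

lemma Linf_surj (n : ℕ) : Function.Surjective (Linf (F := F) n) :=
  fun g => ⟨_, Linf_sum n g⟩

/-- Linear map whose kernel is `Jlam n l`. -/
noncomputable def Llam (n : ℕ) (l : F) : ↥(Rcusp F) →ₗ[F] (Iota n → F) × F :=
  LinearMap.prod (Linf n) (cf (n + 1) - l • cf n)

lemma ker_Llam (n : ℕ) (l : F) :
    LinearMap.ker (Llam (F := F) n l) = (Jlam n l).restrictScalars F := by
  ext f
  simp only [Llam, LinearMap.mem_ker, LinearMap.prod_apply, Pi.prod, Function.prod_apply, Prod.mk_eq_zero,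
    Submodule.restrictScalars_mem, mem_Jlam, LinearMap.sub_apply, LinearMap.smul_apply,
    cf_apply, smul_eq_mul]
  rw [← LinearMap.mem_ker, ker_Linf]
  simp only [Submodule.restrictScalars_mem, mem_Jinf]
  constructor
  · rintro ⟨h1, h2⟩
    exact ⟨h1, sub_eq_zero.mp h2⟩
  · rintro ⟨h1, h2⟩
    exact ⟨h1, by rw [h2, sub_self]⟩

lemma coeff_sum_mono (n m : ℕ) (hm : n ≤ m) (g : Iota n → F) :
    coeff m (∑ j : Iota n, g j • ((mono (j.1 : ℕ) j.2 : ↥(Rcusp F)) : PowerSeries F)) = 0 := by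
  rw [map_sum]
  refine Finset.sum_eq_zero fun j _ => ?_
  rw [map_smul, mono_val, coeff_X_pow, if_neg (by have := j.1.2; omega), smul_zero]

lemma Llam_surj (n : ℕ) (hn : 2 ≤ n) (l : F) : Function.Surjective (Llam (F := F) n l) := by
  rintro ⟨g, c⟩
  have hne : (n + 1) ≠ 1 := by omega
  set w : ↥(Rcusp F) := (∑ j : Iota n, g j • mono (j.1 : ℕ) j.2) + c • mono (n + 1) hne with hw
  have h1 : ∀ k : ℕ, k ≤ n → coeff k (c • ((mono (n+1) hne : ↥(Rcusp F)) : PowerSeries F)) = 0 := by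
    intro k hk
    rw [map_smul, mono_val, coeff_X_pow, if_neg (by omega), smul_zero]
  have h2 : coeff (n+1) (c • ((mono (n+1) hne : ↥(Rcusp F)) : PowerSeries F)) = c := by
    rw [map_smul, mono_val, coeff_X_pow, if_pos rfl, smul_eq_mul, mul_one]
  have hh1 : ∀ k : ℕ, k ≤ n → coeff k ((c • mono (n+1) hne : ↥(Rcusp F)) : PowerSeries F) = 0 := by
    intro k hk; rw [Subalgebra.coe_smul]; exact h1 k hk
  refine ⟨w, Prod.ext ?_ ?_⟩
  · show Linf n w = g
    rw [hw, map_add, Linf_sum]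
    have hz : Linf (F := F) n (c • mono (n + 1) hne) = 0 := by
      funext k
      exact hh1 k.1 (le_of_lt (lt_of_lt_of_le k.1.2 (by omega)))
    rw [hz, add_zero]
  · show coeff (n+1) (w : PowerSeries F) - l * coeff n (w : PowerSeries F) = c
    rw [hw]
    push_cast
    rw [map_add, map_add, coeff_sum_mono n (n+1) (by omega), coeff_sum_mono n n le_rfl, h2,
      h1 n le_rfl]
    simp

end Cusp

namespace Cusp
open PowerSeries
variable {F : Type*} [Field F]

/-- General tool: `R ⧸ I ≃ V` when `I` is the kernel of a surjective `F`-linear map onto `V`. -/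
noncomputable def quotEquiv {I : Ideal ↥(Rcusp F)} {V : Type*} [AddCommGroup V] [Module F V]
    (L : ↥(Rcusp F) →ₗ[F] V) (hker : LinearMap.ker L = I.restrictScalars F)
    (hsurj : Function.Surjective L) : (↥(Rcusp F) ⧸ I) ≃ₗ[F] V :=
  (Submodule.Quotient.restrictScalarsEquiv F I).symm.trans
    ((Submodule.quotEquivOfEq _ _ hker.symm).trans (L.quotKerEquivOfSurjective hsurj))

lemma quot_props {I : Ideal ↥(Rcusp F)} {V : Type*} [AddCommGroup V] [Module F V]
    [FiniteDimensional F V]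
    (L : ↥(Rcusp F) →ₗ[F] V) (hker : LinearMap.ker L = I.restrictScalars F)
    (hsurj : Function.Surjective L) :
    FiniteDimensional F (↥(Rcusp F) ⧸ I) ∧
      Module.finrank F (↥(Rcusp F) ⧸ I) = Module.finrank F V := by
  have e := quotEquiv L hker hsurj
  exact ⟨Module.Finite.equiv e.symm, e.finrank_eq⟩

lemma props_Jinf (n : ℕ) :
    FiniteDimensional F (↥(Rcusp F) ⧸ (Jinf n : Ideal ↥(Rcusp F))) ∧
      Module.finrank F (↥(Rcusp F) ⧸ (Jinf n : Ideal ↥(Rcusp F))) = Fintype.card (Iota n) := by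
  have h := quot_props (Linf (F := F) n) (ker_Linf n) (Linf_surj n)
  rwa [Module.finrank_pi] at h

lemma props_Jlam (n : ℕ) (hn : 2 ≤ n) (l : F) :
    FiniteDimensional F (↥(Rcusp F) ⧸ (Jlam n l : Ideal ↥(Rcusp F))) ∧
      Module.finrank F (↥(Rcusp F) ⧸ (Jlam n l : Ideal ↥(Rcusp F))) = n := by
  have h := quot_props (Llam (F := F) n l) (ker_Llam n l) (Llam_surj n hn l)
  rwa [Module.finrank_prod, Module.finrank_pi, Module.finrank_self, card_Iota hn,
    Nat.sub_add_cancel (by omega)] at h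

lemma Jinf_zero : (Jinf 0 : Ideal ↥(Rcusp F)) = ⊤ := by
  ext f
  simp [mem_Jinf]

lemma props_top :
    FiniteDimensional F (↥(Rcusp F) ⧸ (⊤ : Ideal ↥(Rcusp F))) ∧
      Module.finrank F (↥(Rcusp F) ⧸ (⊤ : Ideal ↥(Rcusp F))) = 0 := by
  have h := props_Jinf (F := F) 0
  rwa [Jinf_zero, card_Iota_zero] at h

lemma props_Jinf' (n : ℕ) (hn : 2 ≤ n) :
    FiniteDimensional F (↥(Rcusp F) ⧸ (Jinf n : Ideal ↥(Rcusp F))) ∧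
      Module.finrank F (↥(Rcusp F) ⧸ (Jinf n : Ideal ↥(Rcusp F))) = n - 1 := by
  have h := props_Jinf (F := F) n
  rwa [card_Iota hn] at h

end Cusp

namespace Cusp
open PowerSeries
variable {F : Type*} [Field F]

lemma coeff_X_pow_mul_lt {m j : ℕ} (t : PowerSeries F) (hj : j < m) :
    coeff j (X ^ m * t) = 0 :=
  X_pow_dvd_iff.mp ⟨t, rfl⟩ j hj

lemma exists_nonzero (I : Ideal ↥(Rcusp F)) [FiniteDimensional F (↥(Rcusp F) ⧸ I)] :
    ∃ p ∈ I, p ≠ (0 : ↥(Rcusp F)) := by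
  classical
  set d := Module.finrank F (↥(Rcusp F) ⧸ I) with hd
  let μ : ↥(Rcusp F) →ₗ[F] (↥(Rcusp F) ⧸ I) := (Submodule.mkQ I).restrictScalars F
  set v : Fin (d + 1) → (↥(Rcusp F) ⧸ I) := fun k => μ (mono (2 * k) (by omega)) with hv
  have hnli : ¬ LinearIndependent F v := by
    intro h
    have := h.fintype_card_le_finrank
    rw [Fintype.card_fin] at this
    omega
  rw [Fintype.not_linearIndependent_iff] at hnli
  obtain ⟨c, hsum, k₀, hk₀⟩ := hnli
  refine ⟨∑ k : Fin (d + 1), c k • mono (2 * (k : ℕ)) (by omega), ?_, ?_⟩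
  · have : μ (∑ k : Fin (d + 1), c k • mono (2 * (k : ℕ)) (by omega)) = 0 := by
      rw [map_sum]
      simpa only [map_smul] using hsum
    simpa only [μ, LinearMap.restrictScalars_apply, Submodule.mkQ_apply,
      Submodule.Quotient.mk_eq_zero] using this
  · intro hzero
    have hco : coeff (2 * (k₀ : ℕ))
        ((∑ k : Fin (d + 1), c k • mono (2 * (k : ℕ)) (by omega) : ↥(Rcusp F)) : PowerSeries F)
        = c k₀ := by
      push_cast
      rw [map_sum]
      rw [Finset.sum_eq_single_of_mem k₀ (Finset.mem_univ k₀)]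
      · rw [map_smul, mono_val, coeff_X_pow, if_pos rfl, smul_eq_mul, mul_one]
      · intro k _ hk
        rw [map_smul, mono_val, coeff_X_pow, if_neg, smul_zero]
        intro h
        exact hk (Fin.ext (by omega))
    rw [hzero] at hco
    simp at hco
    exact hk₀ hco.symm

theorem classify (I : Ideal ↥(Rcusp F)) [FiniteDimensional F (↥(Rcusp F) ⧸ I)] :
    I = ⊤ ∨ (∃ n : ℕ, 2 ≤ n ∧ I = Jinf n) ∨ (∃ n : ℕ, 2 ≤ n ∧ ∃ l : F, I = Jlam n l) := by
  classical
  obtain ⟨p, hpI, hp0⟩ := exists_nonzero I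
  set S : Set ℕ := {m | ∃ f : ↥(Rcusp F), f ∈ I ∧ coeff m (f : PowerSeries F) ≠ 0} with hS
  have hSne : S.Nonempty := by
    have hpv : (p : PowerSeries F) ≠ 0 := fun h => hp0 (Subtype.ext h)
    by_contra h
    rw [Set.not_nonempty_iff_eq_empty, Set.eq_empty_iff_forall_notMem] at h
    apply hpv
    ext m
    rw [map_zero]
    by_contra hm
    exact h m ⟨p, hpI, hm⟩
  set n := sInf S with hn
  obtain ⟨f₀, hf₀I, hf₀n⟩ : ∃ f : ↥(Rcusp F), f ∈ I ∧ coeff n (f : PowerSeries F) ≠ 0 :=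
    Nat.sInf_mem hSne
  have hmin : ∀ g : ↥(Rcusp F), g ∈ I → ∀ m < n, coeff m (g : PowerSeries F) = 0 := by
    intro g hg m hm
    by_contra hc
    have hmem : m ∈ S := ⟨g, hg, hc⟩
    exact absurd (Nat.sInf_le hmem) (by omega)
  have hn1 : n ≠ 1 := by
    intro h
    rw [h] at hf₀n
    exact hf₀n f₀.2
  rcases Nat.eq_zero_or_pos n with hn0 | hnpos
  · -- I = ⊤
    left
    rw [hn0] at hf₀n
    have hu : constantCoeff (f₀ : PowerSeries F) ≠ 0 := by
      rwa [← coeff_zero_eq_constantCoeff_apply]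
    set g := (f₀ : PowerSeries F)⁻¹ with hg
    have hfg : (f₀ : PowerSeries F) * g = 1 := PowerSeries.mul_inv_cancel _ hu
    have hg1 : coeff 1 g = 0 := by
      have h := congrArg (coeff 1) hfg
      rw [PowerSeries.coeff_mul, Finset.Nat.sum_antidiagonal_eq_sum_range_succ_mk] at h
      simp [Finset.sum_range_succ, mem_Rcusp.mp f₀.2, PowerSeries.coeff_one] at h
      rcases h with h | h
      · exact absurd h hu
      · exact h
    have hone : (1 : ↥(Rcusp F)) ∈ I := by
      have : (1 : ↥(Rcusp F)) = ⟨g, hg1⟩ * f₀ := by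
        apply Subtype.ext
        rw [coe_mul]
        show (1 : PowerSeries F) = g * (f₀ : PowerSeries F)
        rw [mul_comm, hfg]
      rw [this]
      exact Ideal.mul_mem_left I _ hf₀I
    exact (Ideal.eq_top_iff_one I).mpr hone
  · have hn2 : 2 ≤ n := by omega
    -- the tail lemma
    have htail : ∀ h : ↥(Rcusp F), (∀ j < n + 2, coeff j (h : PowerSeries F) = 0) → h ∈ I := by
      intro h hcoe
      obtain ⟨t, ht⟩ : X ^ (n + 2) ∣ (h : PowerSeries F) := X_pow_dvd_iff.mpr hcoe
      obtain ⟨u, hu⟩ : X ^ n ∣ (f₀ : PowerSeries F) :=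
        X_pow_dvd_iff.mpr (fun m hm => hmin f₀ hf₀I m hm)
      have hu0 : constantCoeff u ≠ 0 := by
        intro h0
        apply hf₀n
        rw [hu]
        have : coeff n (X ^ n * u) = coeff 0 u := by
          have := coeff_X_pow_mul u n 0
          simpa using this
        rw [this, coeff_zero_eq_constantCoeff_apply, h0]
      have huinv : u⁻¹ * u = 1 := PowerSeries.inv_mul_cancel _ hu0
      set r := X ^ 2 * t * u⁻¹ with hr
      have hr1 : coeff 1 r = 0 := by
        have : X ^ 2 ∣ r := ⟨t * u⁻¹, by rw [hr]; ring⟩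
        exact X_pow_dvd_iff.mp this 1 one_lt_two
      have hval : r * (f₀ : PowerSeries F) = X ^ (n + 2) * t := by
        rw [hr, hu]
        calc X ^ 2 * t * u⁻¹ * (X ^ n * u) = X ^ 2 * X ^ n * t * (u⁻¹ * u) := by ring
        _ = X ^ (n + 2) * t := by rw [huinv, mul_one, ← pow_add]; ring_nf
      have heq : h = ⟨r, hr1⟩ * f₀ := by
        apply Subtype.ext
        rw [coe_mul]
        show (h : PowerSeries F) = r * (f₀ : PowerSeries F)
        rw [hval, ← ht]
      rw [heq]
      exact Ideal.mul_mem_left I _ hf₀I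
    set a := coeff n (f₀ : PowerSeries F) with ha
    set b := coeff (n + 1) (f₀ : PowerSeries F) with hb
    by_cases hA : ∃ g : ↥(Rcusp F), g ∈ I ∧ coeff n (g : PowerSeries F) = 0 ∧
        coeff (n + 1) (g : PowerSeries F) ≠ 0
    · -- I = Jinf n
      obtain ⟨g, hgI, hgn, hgn1⟩ := hA
      right; left
      refine ⟨n, hn2, ?_⟩
      ext f
      constructor
      · intro hf
        exact hmin f hf
      · intro hf
        rw [mem_Jinf] at hf
        set α := coeff n (f : PowerSeries F) / a with hα
        set β := (coeff (n + 1) (f : PowerSeries F) - α * b) / coeff (n + 1) (g : PowerSeries F) with hβ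
        have h'mem : f - α • f₀ - β • g ∈ I := by
          apply htail
          intro j hj
          have hco : coeff j ((f - α • f₀ - β • g : ↥(Rcusp F)) : PowerSeries F)
              = coeff j (f : PowerSeries F) - α * coeff j (f₀ : PowerSeries F)
                - β * coeff j (g : PowerSeries F) := by
            push_cast
            rw [map_sub, map_sub, map_smul, map_smul, smul_eq_mul, smul_eq_mul]
          rw [hco]
          obtain hj' | rfl | rfl : j < n ∨ j = n ∨ j = n + 1 := by omega
          · rw [hf j hj', hmin f₀ hf₀I j hj', hmin g hgI j hj']; ring
          · rw [hgn, hα, ← ha]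
            field_simp; ring
          · rw [hβ, ← hb]
            field_simp; ring
        have : f = (f - α • f₀ - β • g) + α • f₀ + β • g := by ring
        rw [this]
        exact I.add_mem (I.add_mem h'mem (I.smul_of_tower_mem α hf₀I)) (I.smul_of_tower_mem β hgI)
    · -- I = Jlam n (b / a)
      push_neg at hA
      right; right
      refine ⟨n, hn2, b / a, ?_⟩
      ext f
      constructor
      · intro hf
        refine ⟨hmin f hf, ?_⟩
        set α := coeff n (f : PowerSeries F) / a with hα
        have hsub : f - α • f₀ ∈ I := I.sub_mem hf (I.smul_of_tower_mem α hf₀I)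
        have hco : ∀ j, coeff j ((f - α • f₀ : ↥(Rcusp F)) : PowerSeries F)
            = coeff j (f : PowerSeries F) - α * coeff j (f₀ : PowerSeries F) := by
          intro j
          push_cast
          rw [map_sub, map_smul, smul_eq_mul]
        have hzn : coeff n ((f - α • f₀ : ↥(Rcusp F)) : PowerSeries F) = 0 := by
          rw [hco, hα, ← ha]
          field_simp; ring
        have := hA _ hsub hzn
        rw [hco] at this
        have haz : a ≠ 0 := hf₀n
        field_simp [hα] at this ⊢
        rw [sub_eq_zero] at this
        rw [this]
        simp only [hα, hb]; rw [div_mul_eq_mul_div, div_mul_cancel₀ _ haz]; ring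
      · rintro ⟨h1, h2⟩
        set α := coeff n (f : PowerSeries F) / a with hα
        have h'mem : f - α • f₀ ∈ I := by
          apply htail
          intro j hj
          have hco : coeff j ((f - α • f₀ : ↥(Rcusp F)) : PowerSeries F)
              = coeff j (f : PowerSeries F) - α * coeff j (f₀ : PowerSeries F) := by
            push_cast
            rw [map_sub, map_smul, smul_eq_mul]
          rw [hco]
          obtain hj' | rfl | rfl : j < n ∨ j = n ∨ j = n + 1 := by omega
          · rw [h1 j hj', hmin f₀ hf₀I j hj']; ring
          · rw [hα, ← ha]; field_simp; ring
          · rw [h2, hα, ← hb]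
            field_simp
            ring
        have : f = (f - α • f₀) + α • f₀ := by ring
        rw [this]
        exact I.add_mem h'mem (I.smul_of_tower_mem α hf₀I)

end Cusp

namespace Cusp
open PowerSeries
variable {F : Type*} [Field F]

lemma mono_mem_Jinf (d : ℕ) (hd : 2 ≤ d) :
    mono (d + 1) (by omega) ∈ (Jinf (d + 1) : Ideal ↥(Rcusp F)) := by
  intro j hj
  rw [mono_val, coeff_X_pow, if_neg (by omega)]

lemma mono_not_mem_Jlam (d : ℕ) (hd : 2 ≤ d) (l : F) :
    mono (d + 1) (by omega) ∉ (Jlam d l : Ideal ↥(Rcusp F)) := by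
  rintro ⟨-, h2⟩
  rw [mono_val, coeff_X_pow, if_pos rfl, coeff_X_pow, if_neg (by omega), mul_zero] at h2
  exact one_ne_zero h2

/-- the witness `z^d + l z^{d+1}`. -/
noncomputable def wit (d : ℕ) (hd : 2 ≤ d) (l : F) : ↥(Rcusp F) :=
  ⟨X ^ d + C l * X ^ (d + 1), by
    have : coeff 1 (X ^ d + C l * X ^ (d + 1)) = 0 := by
      rw [map_add, coeff_X_pow, coeff_C_mul, coeff_X_pow, if_neg (by omega),
        if_neg (by omega), mul_zero, add_zero]
    exact this⟩

lemma coeff_wit (d : ℕ) (hd : 2 ≤ d) (l : F) (j : ℕ) :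
    coeff j ((wit d hd l : ↥(Rcusp F)) : PowerSeries F)
      = (if j = d then 1 else 0) + l * (if j = d + 1 then 1 else 0) := by
  show coeff j (X ^ d + C l * X ^ (d + 1)) = _
  rw [map_add, coeff_X_pow, coeff_C_mul, coeff_X_pow]

lemma wit_mem_Jlam (d : ℕ) (hd : 2 ≤ d) (l : F) :
    wit d hd l ∈ (Jlam d l : Ideal ↥(Rcusp F)) := by
  refine ⟨fun j hj => ?_, ?_⟩
  · rw [coeff_wit d hd l j, if_neg (by omega), if_neg (by omega), mul_zero, add_zero]
  · rw [coeff_wit d hd l (d + 1), coeff_wit d hd l d, if_neg (by omega), if_pos rfl,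
      if_pos rfl, if_neg (by omega), mul_one, mul_zero, add_zero, zero_add, mul_one]

lemma Jlam_inj (d : ℕ) (hd : 2 ≤ d) (l l' : F)
    (h : (Jlam d l : Ideal ↥(Rcusp F)) = Jlam d l') : l = l' := by
  have hw : wit d hd l ∈ (Jlam d l' : Ideal ↥(Rcusp F)) := h ▸ wit_mem_Jlam d hd l
  obtain ⟨-, h2⟩ := hw
  rw [coeff_wit d hd l (d + 1), coeff_wit d hd l d, if_neg (by omega), if_pos rfl,
    if_pos rfl, if_neg (by omega), mul_one, mul_zero, add_zero, zero_add, mul_one] at h2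
  exact h2

lemma Jinf_ne_Jlam (d : ℕ) (hd : 2 ≤ d) (l : F) :
    (Jinf (d + 1) : Ideal ↥(Rcusp F)) ≠ Jlam d l := by
  intro h
  exact mono_not_mem_Jlam d hd l (h ▸ mono_mem_Jinf d hd)

/-- classification by codimension -/
lemma eq_top_of (I : Ideal ↥(Rcusp F)) [FiniteDimensional F (↥(Rcusp F) ⧸ I)]
    (hr : Module.finrank F (↥(Rcusp F) ⧸ I) = 0) : I = ⊤ := by
  rcases classify I with h | ⟨n, hn, h⟩ | ⟨n, hn, l, h⟩
  · exact h
  · rw [h] at hr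
    rw [(props_Jinf' n hn).2] at hr
    omega
  · rw [h] at hr
    rw [(props_Jlam n hn l).2] at hr
    omega

lemma eq_Jinf2_of (I : Ideal ↥(Rcusp F)) [FiniteDimensional F (↥(Rcusp F) ⧸ I)]
    (hr : Module.finrank F (↥(Rcusp F) ⧸ I) = 1) : I = Jinf 2 := by
  rcases classify I with h | ⟨n, hn, h⟩ | ⟨n, hn, l, h⟩
  · rw [h] at hr
    rw [props_top.2] at hr
    omega
  · rw [h] at hr
    rw [(props_Jinf' n hn).2] at hr
    have : n = 2 := by omega
    rw [h, this]
  · rw [h] at hr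
    rw [(props_Jlam n hn l).2] at hr
    omega

lemma eq_of_two_le (I : Ideal ↥(Rcusp F)) [FiniteDimensional F (↥(Rcusp F) ⧸ I)]
    {d : ℕ} (hd : 2 ≤ d) (hr : Module.finrank F (↥(Rcusp F) ⧸ I) = d) :
    I = Jinf (d + 1) ∨ ∃ l : F, I = Jlam d l := by
  rcases classify I with h | ⟨n, hn, h⟩ | ⟨n, hn, l, h⟩
  · rw [h] at hr
    rw [props_top.2] at hr
    omega
  · rw [h] at hr
    rw [(props_Jinf' n hn).2] at hr
    have : n = d + 1 := by omega
    left
    rw [h, this]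
  · rw [h] at hr
    rw [(props_Jlam n hn l).2] at hr
    right
    exact ⟨l, by rw [h, hr]⟩

/-- The subtype of ideals of codimension `d`. -/
abbrev IdealsOf (F : Type*) [Field F] (d : ℕ) : Type _ :=
  {I : Ideal ↥(Rcusp F) //
    FiniteDimensional F (↥(Rcusp F) ⧸ I) ∧ Module.finrank F (↥(Rcusp F) ⧸ I) = d}

lemma card_codim_01 (d : ℕ) (hd : d = 0 ∨ d = 1) : Nat.card (IdealsOf F d) = 1 := by
  rw [Nat.card_eq_one_iff_unique]
  rcases hd with rfl | rfl
  · constructor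
    · constructor
      intro ⟨I, hI1, hI2⟩ ⟨J, hJ1, hJ2⟩
      have h1 : I = ⊤ := by have := hI1; exact eq_top_of I hI2
      have h2 : J = ⊤ := by have := hJ1; exact eq_top_of J hJ2
      exact Subtype.ext (h1.trans h2.symm)
    · exact ⟨⟨⊤, props_top⟩⟩
  · constructor
    · constructor
      intro ⟨I, hI1, hI2⟩ ⟨J, hJ1, hJ2⟩
      have h1 : I = Jinf 2 := by have := hI1; exact eq_Jinf2_of I hI2
      have h2 : J = Jinf 2 := by have := hJ1; exact eq_Jinf2_of J hJ2
      exact Subtype.ext (h1.trans h2.symm)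
    · exact ⟨⟨Jinf 2, props_Jinf' 2 le_rfl⟩⟩

lemma card_codim_ge2 [Finite F] (d : ℕ) (hd : 2 ≤ d) :
    Nat.card (IdealsOf F d) = Nat.card F + 1 := by
  classical
  set e : Option F → IdealsOf F d := fun o =>
    match o with
    | none => ⟨Jinf (d + 1), props_Jinf' (d + 1) (by omega)⟩
    | some l => ⟨Jlam d l, props_Jlam d hd l⟩ with he
  have hbij : Function.Bijective e := by
    constructor
    · intro o o' h
      match o, o' with
      | none, none => rfl
      | some l, some l' =>
        have := congrArg Subtype.val h
        simp only [he] at this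
        rw [Jlam_inj d hd l l' this]
      | none, some l =>
        have := congrArg Subtype.val h
        simp only [he] at this
        exact absurd this (Jinf_ne_Jlam d hd l)
      | some l, none =>
        have := congrArg Subtype.val h
        simp only [he] at this
        exact absurd this.symm (Jinf_ne_Jlam d hd l)
    · intro ⟨I, hI1, hI2⟩
      have := hI1
      rcases eq_of_two_le I hd hI2 with h | ⟨l, h⟩
      · exact ⟨none, Subtype.ext h.symm⟩
      · exact ⟨some l, Subtype.ext h.symm⟩
  rw [← Nat.card_congr (Equiv.ofBijective e hbij), Finite.card_option]

end Cusp

theorem stmt15 (F : Type*) [Field F] [Fintype F] (q : ℕ) (hq : Fintype.card F = q) :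
    (∀ d : ℕ, (d = 0 ∨ d = 1) →
      Nat.card {I : Ideal ↥(Rcusp F) //
        FiniteDimensional F (↥(Rcusp F) ⧸ I) ∧
          Module.finrank F (↥(Rcusp F) ⧸ I) = d} = 1) ∧
    (∀ d : ℕ, 2 ≤ d →
      Nat.card {I : Ideal ↥(Rcusp F) //
        FiniteDimensional F (↥(Rcusp F) ⧸ I) ∧
          Module.finrank F (↥(Rcusp F) ⧸ I) = d} = q + 1) ∧
    (1 - PowerSeries.X) *
        PowerSeries.mk (fun d =>
          (Nat.card {I : Ideal ↥(Rcusp F) //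
            FiniteDimensional F (↥(Rcusp F) ⧸ I) ∧
              Module.finrank F (↥(Rcusp F) ⧸ I) = d} : ℤ)) =
      1 + PowerSeries.C (q : ℤ) * PowerSeries.X ^ 2 := by
  have h01 : ∀ d : ℕ, (d = 0 ∨ d = 1) →
      Nat.card {I : Ideal ↥(Rcusp F) //
        FiniteDimensional F (↥(Rcusp F) ⧸ I) ∧
          Module.finrank F (↥(Rcusp F) ⧸ I) = d} = 1 :=
    fun d hd => Cusp.card_codim_01 d hd
  have h2 : ∀ d : ℕ, 2 ≤ d →
      Nat.card {I : Ideal ↥(Rcusp F) //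
        FiniteDimensional F (↥(Rcusp F) ⧸ I) ∧
          Module.finrank F (↥(Rcusp F) ⧸ I) = d} = q + 1 := by
    intro d hd
    rw [Cusp.card_codim_ge2 d hd, Nat.card_eq_fintype_card, hq]
  refine ⟨h01, h2, ?_⟩
  set A : ℕ → ℤ := fun d =>
    (Nat.card {I : Ideal ↥(Rcusp F) //
      FiniteDimensional F (↥(Rcusp F) ⧸ I) ∧
        Module.finrank F (↥(Rcusp F) ⧸ I) = d} : ℤ) with hA
  have hA0 : A 0 = 1 := by rw [hA]; simp only; rw [h01 0 (Or.inl rfl)]; norm_num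
  have hA1 : A 1 = 1 := by rw [hA]; simp only; rw [h01 1 (Or.inr rfl)]; norm_num
  have hA2 : ∀ d : ℕ, 2 ≤ d → A d = (q : ℤ) + 1 := by
    intro d hd
    rw [hA]; simp only; rw [h2 d hd]; push_cast; ring
  ext n
  rw [sub_mul, one_mul, map_sub]
  match n with
  | 0 =>
    rw [PowerSeries.coeff_zero_X_mul, PowerSeries.coeff_mk, hA0, map_add,
      PowerSeries.coeff_C_mul, PowerSeries.coeff_X_pow, PowerSeries.coeff_one]
    norm_num
  | 1 =>
    rw [PowerSeries.coeff_succ_X_mul, PowerSeries.coeff_mk, PowerSeries.coeff_mk, hA0, hA1, map_add, PowerSeries.coeff_C_mul, PowerSeries.coeff_X_pow,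
      PowerSeries.coeff_one]
    norm_num
  | 2 =>
    rw [PowerSeries.coeff_succ_X_mul, PowerSeries.coeff_mk, PowerSeries.coeff_mk, hA1,
      hA2 2 le_rfl, map_add, PowerSeries.coeff_C_mul, PowerSeries.coeff_X_pow,
      PowerSeries.coeff_one]
    norm_num
  | (n + 3) =>
    rw [PowerSeries.coeff_succ_X_mul, PowerSeries.coeff_mk, PowerSeries.coeff_mk,
      hA2 (n + 3) (by omega), hA2 (n + 2) (by omega), map_add, PowerSeries.coeff_C_mul,
      PowerSeries.coeff_X_pow, PowerSeries.coeff_one]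
    rw [if_neg (by omega), if_neg (by omega)]
    norm_num
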